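/- Let p be a prime, d ≥ 1, V = F_p^d, and let G be an irreducible subgroup of GL(V). Then for every nonzero orbit O of G on V, the d(p−1)-fold sumset of O ∪ {0} equals V. (This is the sumset formulation of the statement that the directed orbital diameter of VG is at most d(p−1).) -/

import Mathlib

/-- The `m`-fold sumset of a subset `Δ` of an additive commutative monoid. -/
def sumset {V : Type*} [AddCommMonoid V] (m : ℕ) (Δ : Set V) : Set V :=
  {x | ∃ f : Fin m → V, (∀ i, f i ∈ Δ) ∧ ∑ i, f i = x}

/-- The orbit of a vector `v` under a subgroup `G` of the general linear group
(realized as units of the endomorphism ring). -/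
def orbitOf {R V : Type*} [CommSemiring R] [AddCommMonoid V] [Module R V]
    (G : Subgroup (Module.End R V)ˣ) (v : V) : Set V :=
  {w | ∃ g ∈ G, (g : Module.End R V) v = w}

/-- A linear group `G ≤ GL(V)` is irreducible if the only `G`-invariant subspaces
of `V` are `0` and `V`. -/
def IsIrreducibleLinearGroup {R V : Type*} [CommSemiring R] [AddCommMonoid V] [Module R V]
    (G : Subgroup (Module.End R V)ˣ) : Prop :=
  ∀ W : Submodule R V, (∀ g ∈ G, ∀ w ∈ W, (g : Module.End R V) w ∈ W) → W = ⊥ ∨ W = ⊤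

theorem diam_le_d_mul_p_sub_one (p d : ℕ) (hp : p.Prime) (hd : 1 ≤ d)
    (G : Subgroup (Module.End (ZMod p) (Fin d → ZMod p))ˣ)
    (hirr : IsIrreducibleLinearGroup G)
    (v : Fin d → ZMod p) (hv : v ≠ 0) :
    sumset (d * (p - 1)) (orbitOf G v ∪ {0}) = Set.univ := by
  haveI : Fact p.Prime := ⟨hp⟩
  set O : Set (Fin d → ZMod p) := orbitOf G v with hO
  -- the span of the orbit is G-invariant, hence ⊤
  have hvO : v ∈ O := ⟨1, one_mem G, rfl⟩
  have hspan : Submodule.span (ZMod p) O = ⊤ := by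
    have hinv : ∀ g ∈ G, ∀ w ∈ Submodule.span (ZMod p) O,
        (g : Module.End (ZMod p) (Fin d → ZMod p)) w ∈ Submodule.span (ZMod p) O := by
      intro g hg w hw
      have himg : (g : Module.End (ZMod p) (Fin d → ZMod p)) '' O ⊆ O := by
        rintro _ ⟨_, ⟨h, hh, rfl⟩, rfl⟩
        exact ⟨g * h, mul_mem hg hh, rfl⟩
      have : (g : Module.End (ZMod p) (Fin d → ZMod p)) w ∈
          Submodule.map (g : Module.End (ZMod p) (Fin d → ZMod p)) (Submodule.span (ZMod p) O) :=
        Submodule.mem_map_of_mem hw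
      rw [Submodule.map_span] at this
      exact Submodule.span_mono himg this
    rcases hirr _ hinv with h | h
    · exfalso
      apply hv
      have hm := Submodule.subset_span (R := ZMod p) hvO
      rw [h] at hm
      simpa using hm
    · exact h
  -- extract a linearly independent spanning subset of the orbit
  obtain ⟨s, hsO, hs_span, hs_li⟩ := exists_linearIndependent (ZMod p) O
  rw [hspan] at hs_span
  have hsfin : s.Finite := Set.Finite.subset (Set.finite_univ) (Set.subset_univ _)
  haveI : Fintype s := hsfin.fintype
  let B : Module.Basis s (ZMod p) (Fin d → ZMod p) := Module.Basis.mk hs_li (by rw [Subtype.range_coe, hs_span])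
  have hcard : Fintype.card s = d := by
    have := Module.finrank_eq_card_basis B
    rwa [Module.finrank_fin_fun, eq_comm] at this
  let e : Fin d ≃ s := (Fintype.equivFinOfCardEq hcard).symm
  let B' : Module.Basis (Fin d) (ZMod p) (Fin d → ZMod p) := B.reindex e.symm
  ext x
  simp only [Set.mem_univ, iff_true]
  -- write x in the basis
  set c : Fin d → ZMod p := fun i => B'.repr x i with hc
  have hx : ∑ i, c i • (B' i) = x := B'.sum_repr x
  -- the summand function
  let g : Fin d × Fin (p - 1) → (Fin d → ZMod p) := fun q =>
    if (q.2 : ℕ) < (c q.1).val then B' q.1 else 0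
  refine ⟨g ∘ (finProdFinEquiv (m := d) (n := p - 1)).symm, ?_, ?_⟩
  · intro i
    simp only [Function.comp_apply, g]
    split
    · left
      have hmem : B' (finProdFinEquiv.symm i).1 ∈ s := by
        simp only [B', B, Module.Basis.reindex_apply, Module.Basis.mk_apply]
        exact Subtype.coe_prop _
      exact hsO hmem
    · exact Or.inr rfl
  · have key : ∀ i : Fin d, (∑ j : Fin (p - 1), g (i, j)) = c i • B' i := by
      intro i
      have hval : (c i).val ≤ p - 1 := Nat.le_sub_one_of_lt ((c i).val_lt)
      have : (∑ j : Fin (p - 1), g (i, j))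
          = ∑ j ∈ Finset.range (p - 1), (if j < (c i).val then B' i else 0) :=
        Fin.sum_univ_eq_sum_range (fun j => if j < (c i).val then B' i else 0) (p - 1)
      rw [this, ← Finset.sum_filter]
      have hfilt : (Finset.range (p - 1)).filter (· < (c i).val)
          = Finset.range ((c i).val) := by
        ext j
        simp only [Finset.mem_filter, Finset.mem_range]
        omega
      rw [hfilt, Finset.sum_const, Finset.card_range, ← Nat.cast_smul_eq_nsmul (ZMod p),
        ZMod.natCast_val, ZMod.cast_id]
    calc ∑ k, (g ∘ (finProdFinEquiv (m := d) (n := p - 1)).symm) k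
        = ∑ q : Fin d × Fin (p - 1), g q := by
          rw [← Equiv.sum_comp (finProdFinEquiv (m := d) (n := p - 1))
              (g ∘ (finProdFinEquiv (m := d) (n := p - 1)).symm)]
          exact Finset.sum_congr rfl fun q _ => by simp
      _ = ∑ i, ∑ j, g (i, j) := by rw [Fintype.sum_prod_type]
      _ = ∑ i, c i • B' i := Finset.sum_congr rfl fun i _ => key i
      _ = x := hx
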